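/- arXiv:1607.06021 — 4 statements merged into one kernel-verified Lean document; each statement's English description precedes it below -/
import Mathlib

section
/- Let a set of jobs with processing times p_1,…,p_k and weights w_1,…,w_k be both processing-time-inclusive and weight-inclusive, and let S be the feasible synchronized schedule executing these jobs in the order j_1,…,j_k on a single shared processor. Let S' be the synchronized schedule on the same processor that executes k jobs in the reversed order, where the job in position i has processing time w_{k+1−i} and weight p_{k+1−i}. Then S' is feasible and the total weighted overlaps of S and S' are equal; that is, (1/2)·Σ_{ℓ} p_ℓ w_ℓ − Σ_{ℓ} Σ_{t<ℓ} p_t w_ℓ/2^{ℓ+1−t} = (1/2)·Σ_{ℓ} p'_ℓ w'_ℓ − Σ_{ℓ} Σ_{t<ℓ} p'_t w'_ℓ/2^{ℓ+1−t} with p'_i = w_{k+1−i} and w'_i = p_{k+1−i}. -/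
/-- Start times on a shared processor for a sequence of processing times `q`:
`Tseq q 0 = 0` and `Tseq q (i+1) = (Tseq q i + q_i)/2`; job `i` (0-indexed)
occupies the shared processor during `(Tseq q i, Tseq q (i+1))`. -/
noncomputable def Tseq (q : List ℝ) : ℕ → ℝ
  | 0 => 0
  | i + 1 => (Tseq q i + q.getD i 0) / 2

/-- A sequence of processing times is feasible on a shared processor if every
job is long enough: `q_i > T_i`. -/
def ListFeasible (q : List ℝ) : Prop :=
  ∀ i < q.length, Tseq q i < q.getD i 0

/-- Total weighted overlap of one shared processor executing jobs with
processing times `q` and weights `v` (in this order): the overlap of the `i`-th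
job is `(q_i - T_i)/2`. -/
noncomputable def listOverlap (q v : List ℝ) : ℝ :=
  ∑ i ∈ Finset.range q.length, v.getD i 0 * (q.getD i 0 - Tseq q i) / 2

/-- A synchronized schedule: each of the `m` shared processors gets a finite
sequence of distinct jobs, and each job appears on at most one shared processor
(jobs appearing nowhere execute on their private processors only). -/
structure SyncSchedule (J : Type) (m : ℕ) where
  seq : Fin m → List J
  nodup : ∀ i, (seq i).Nodup
  disj : ∀ i i' j, j ∈ seq i → j ∈ seq i' → i = i'

namespace SyncSchedule

variable {J : Type} {m : ℕ}

/-- Feasibility of a synchronized schedule for processing times `p`. -/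
def Feasible (p : J → ℝ) (S : SyncSchedule J m) : Prop :=
  ∀ i, ListFeasible ((S.seq i).map p)

/-- Total weighted overlap of a synchronized schedule. -/
noncomputable def Omega (p w : J → ℝ) (S : SyncSchedule J m) : ℝ :=
  ∑ i, listOverlap ((S.seq i).map p) ((S.seq i).map w)

/-- A feasible synchronized schedule is optimal if it maximizes the total
weighted overlap among all feasible synchronized schedules. -/
def Optimal (p w : J → ℝ) (S : SyncSchedule J m) : Prop :=
  S.Feasible p ∧ ∀ S' : SyncSchedule J m, S'.Feasible p → S'.Omega p w ≤ S.Omega p w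

end SyncSchedule

/-- A finite collection of processing times (given as a list `q`) is
*processing-time-inclusive* if, for its ascending sort `s = [q_1, …, q_k]`,
`Σ_{ℓ=1}^{k-1} q_{ℓ+1} / 2^(k-ℓ) < q_1`; i.e. the makespan of all but the
shortest job scheduled in ascending order is shorter than the shortest job. -/
def PTInclusive (q : List ℝ) : Prop :=
  ∃ s : List ℝ, s.Perm q ∧ s.Pairwise (· ≤ ·) ∧
    ∑ ℓ ∈ Finset.range (s.length - 1), s.getD (ℓ + 1) 0 / 2 ^ (s.length - 1 - ℓ)
      < s.getD 0 0

lemma tseq_eq (q : List ℝ) : ∀ n, Tseq q n = ∑ t ∈ Finset.range n, q.getD t 0 / 2 ^ (n - t)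
  | 0 => by simp [Tseq]
  | n + 1 => by
    rw [Tseq, tseq_eq q n, Finset.sum_range_succ]
    have h2 : ∀ t ∈ Finset.range n,
        q.getD t 0 / 2 ^ (n + 1 - t) = q.getD t 0 / 2 ^ (n - t) / 2 := by
      intro t ht
      have : n + 1 - t = (n - t) + 1 := by
        have := Finset.mem_range.mp ht; omega
      rw [this, pow_succ]; ring
    rw [Finset.sum_congr rfl h2, ← Finset.sum_div]
    have : n + 1 - n = 1 := by omega
    rw [this]; ring

lemma getD_reverse (l : List ℝ) (i : ℕ) (h : i < l.length) :
    l.reverse.getD i 0 = l.getD (l.length - 1 - i) 0 := by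
  rw [List.getD_eq_getElem _ _ (by simp [h] : i < l.reverse.length),
      List.getD_eq_getElem _ _ (by omega : l.length - 1 - i < l.length),
      List.getElem_reverse]

lemma sorted_getD_le (s : List ℝ) (hs : s.Pairwise (· ≤ ·)) {a b : ℕ} (hab : a ≤ b)
    (hb : b < s.length) : s.getD a 0 ≤ s.getD b 0 := by
  have ha : a < s.length := lt_of_le_of_lt hab hb
  rw [List.getD_eq_getElem _ _ ha, List.getD_eq_getElem _ _ hb]
  rcases eq_or_lt_of_le hab with rfl | h
  · exact le_refl _
  · exact List.pairwise_iff_getElem.mp hs a b ha hb h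

open Fin.NatCast in
lemma key_bound (L s : List ℝ) (hs : s.Pairwise (· ≤ ·)) (hperm : s.Perm L)
    (hpos : ∀ a ∈ L, 0 < a) (i : ℕ) (hi : i < L.length) :
    Tseq L i ≤ ∑ ℓ ∈ Finset.range (s.length - 1), s.getD (ℓ + 1) 0 / 2 ^ (s.length - 1 - ℓ) := by
  set n := L.length with hn
  have hsl : s.length = n := hperm.length_eq
  have hspos : ∀ j < s.length, 0 ≤ s.getD j 0 := by
    intro j hj
    rw [List.getD_eq_getElem _ _ hj]
    exact le_of_lt (hpos _ (hperm.mem_iff.mp (s.getElem_mem hj)))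
  have hRHSnn : ∀ ℓ ∈ Finset.range (s.length - 1),
      (0:ℝ) ≤ s.getD (ℓ + 1) 0 / 2 ^ (s.length - 1 - ℓ) := by
    intro ℓ hℓ
    have := Finset.mem_range.mp hℓ
    exact div_nonneg (hspos _ (by omega)) (by positivity)
  rcases Nat.eq_zero_or_pos i with rfl | hi1
  · rw [tseq_eq]; simpa using Finset.sum_nonneg hRHSnn
  -- main case: 1 ≤ i < n
  have hn1 : 1 ≤ n := by omega
  haveI : NeZero n := ⟨by omega⟩
  set f : Fin n → ℝ := L.get with hf
  set σ : Equiv.Perm (Fin n) := Tuple.sort f with hσ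
  have hmono : Monotone (f ∘ σ) := Tuple.monotone_sort f
  have hsofn : s = List.ofFn (f ∘ σ) := by
    refine List.Perm.eq_of_pairwise' hs hmono.sortedLE_ofFn.pairwise ?_
    refine hperm.trans ?_
    have h1 : List.ofFn f = L := List.ofFn_get L
    have h2 : (List.ofFn (f ∘ σ)).Perm (List.ofFn f) := σ.ofFn_comp_perm f
    rw [h1] at h2
    exact h2.symm
  have hg : ∀ u : Fin n, s.getD (u : ℕ) 0 = (f ∘ σ) u := by
    intro u
    rw [hsofn, List.getD_eq_getElem _ _ (by simpa using u.isLt)]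
    simp
  set C : ℕ → ℝ := fun u => if n - i ≤ u then (2:ℝ) ^ u / 2 ^ n else 0 with hC
  set c : Fin n → ℝ := fun u => C (u : ℕ) with hc
  have hCmono : ∀ a b : ℕ, a ≤ b → C a ≤ C b := by
    intro a b hab
    simp only [hC]
    split_ifs with h1 h2 h2
    · exact div_le_div_of_nonneg_right (pow_le_pow_right₀ (by norm_num) hab) (by positivity)
    · omega
    · positivity
    · exact le_refl 0
  have hcmono : Monotone c := fun a b hab => hCmono _ _ hab
  have hmv : Monovary c (f ∘ σ) := hcmono.monovary hmono
  set d : Fin n := ((n - i : ℕ) : Fin n) with hd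
  set τ : Equiv.Perm (Fin n) := (Equiv.subRight d).trans σ⁻¹ with hτ
  have hrearr := hmv.sum_mul_comp_perm_le_sum_mul (σ := τ)
  -- LHS equals Tseq L i
  have hdval : (d : ℕ) = n - i := by
    rw [hd, Fin.val_natCast, Nat.mod_eq_of_lt (by omega)]
  have hLHS : ∑ u : Fin n, c u * (f ∘ σ) (τ u) = Tseq L i := by
    rw [tseq_eq]
    have hfilter : ∑ u ∈ Finset.univ.filter (fun u : Fin n => n - i ≤ (u : ℕ)),
        c u * (f ∘ σ) (τ u) = ∑ u : Fin n, c u * (f ∘ σ) (τ u) :=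
      Finset.sum_filter_of_ne (fun u _ hne => by
        by_contra hcon
        exact hne (by simp only [hc, hC, if_neg hcon, zero_mul]))
    rw [← hfilter]
    refine Finset.sum_nbij' (fun u : Fin n => (u : ℕ) - (n - i))
      (fun t : ℕ => ((t + (n - i) : ℕ) : Fin n)) ?_ ?_ ?_ ?_ ?_
    · intro u hu
      have h1 := (Finset.mem_filter.mp hu).2
      have h2 := u.isLt
      simp only [Finset.mem_range]
      omega
    · intro t ht
      have h1 := Finset.mem_range.mp ht
      refine Finset.mem_filter.mpr ⟨Finset.mem_univ _, ?_⟩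
      rw [Fin.val_natCast, Nat.mod_eq_of_lt (by omega)]
      omega
    · intro u hu
      have h1 := (Finset.mem_filter.mp hu).2
      have h2 := u.isLt
      apply Fin.ext
      rw [Fin.val_natCast]
      rw [Nat.mod_eq_of_lt (by omega)]
      omega
    · intro t ht
      have h1 := Finset.mem_range.mp ht
      rw [Fin.val_natCast, Nat.mod_eq_of_lt (by omega)]
      omega
    · intro u hu
      have h1 := (Finset.mem_filter.mp hu).2
      have h2 := u.isLt
      have hτu : (f ∘ σ) (τ u) = f ⟨(u : ℕ) - (n - i), by omega⟩ := by
        simp only [hτ, Equiv.trans_apply, Equiv.subRight_apply, Function.comp_apply]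
        rw [← Equiv.Perm.mul_apply, mul_inv_cancel, Equiv.Perm.one_apply]
        congr 1
        apply Fin.ext
        simp only [Fin.sub_def, hdval]
        rw [show n - (n - i) + (u:ℕ) = ((u:ℕ) - (n - i)) + n by omega, Nat.add_mod_right,
          Nat.mod_eq_of_lt (by omega)]
      rw [hτu]
      simp only [hc, hC, if_pos h1, hf]
      rw [List.get_eq_getElem,
        ← List.getD_eq_getElem L 0 (by omega : (u:ℕ) - (n - i) < L.length)]
      rw [show i - ((u:ℕ) - (n - i)) = n - (u:ℕ) by omega,
        show (2:ℝ)^n = 2 ^ (n - (u:ℕ)) * 2 ^ (u:ℕ) by rw [← pow_add]; congr 1; omega]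
      have h2u : (2:ℝ) ^ ((u:ℕ)) ≠ 0 := by positivity
      have h2v : (2:ℝ) ^ (n - (u:ℕ)) ≠ 0 := by positivity
      field_simp
      all_goals ring
  -- RHS bounded by the PTI sum
  have hRHS : ∑ u : Fin n, c u * (f ∘ σ) u
      ≤ ∑ ℓ ∈ Finset.range (s.length - 1), s.getD (ℓ + 1) 0 / 2 ^ (s.length - 1 - ℓ) := by
    have h1 : ∑ u : Fin n, c u * (f ∘ σ) u = ∑ u ∈ Finset.range n, C u * s.getD u 0 := by
      rw [← Fin.sum_univ_eq_sum_range (fun u => C u * s.getD u 0) n]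
      refine Finset.sum_congr rfl ?_
      intro u _
      rw [hg u]
    rw [h1, hsl]
    rw [show n = (n - 1) + 1 by omega, Finset.sum_range_succ']
    have h0 : C 0 * s.getD 0 0 = 0 := by
      simp only [hC, if_neg (by omega : ¬ (n - i ≤ 0)), zero_mul]
    rw [h0, add_zero]
    rw [show (n - 1) + 1 - 1 = n - 1 by omega]
    refine Finset.sum_le_sum ?_
    intro ℓ hℓ
    have hℓ' := Finset.mem_range.mp hℓ
    by_cases hcase : n - i ≤ ℓ + 1
    · have hC1 : C (ℓ + 1) = 1 / 2 ^ (n - 1 - ℓ) := by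
        simp only [hC, if_pos hcase]
        rw [show (2:ℝ)^n = 2 ^ (ℓ + 1) * 2 ^ (n - 1 - ℓ) by
          rw [← pow_add]; congr 1; omega]
        have h2u : (2:ℝ) ^ (ℓ + 1) ≠ 0 := by positivity
        rw [div_mul_eq_div_div, div_self h2u]
      rw [hC1]
      exact le_of_eq (by ring)
    · simp only [hC, if_neg hcase, zero_mul]
      exact div_nonneg (hspos _ (by omega)) (by positivity)
  calc Tseq L i = ∑ u : Fin n, c u * (f ∘ σ) (τ u) := hLHS.symm
    _ ≤ ∑ u : Fin n, c u * (f ∘ σ) u := hrearr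
    _ ≤ _ := hRHS

lemma feasible_of_PTI (L : List ℝ) (hpos : ∀ a ∈ L, 0 < a) (h : PTInclusive L) :
    ListFeasible L := by
  obtain ⟨s, hsp, hss, hlt⟩ := h
  intro i hi
  have h1 := key_bound L s hss hsp hpos i hi
  have h2 : s.getD 0 0 ≤ L.getD i 0 := by
    have hmem : L.getD i 0 ∈ s := by
      rw [List.getD_eq_getElem _ _ hi]
      exact hsp.mem_iff.mpr (L.getElem_mem hi)
    obtain ⟨j, hj, hje⟩ := List.mem_iff_getElem.mp hmem
    calc s.getD 0 0 ≤ s.getD j 0 := sorted_getD_le s hss (Nat.zero_le j) hj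
      _ = L.getD i 0 := by rw [List.getD_eq_getElem _ _ hj, hje]
  exact lt_of_le_of_lt h1 (lt_of_lt_of_le hlt h2)

lemma listOverlap_eq (q v : List ℝ) :
    listOverlap q v = (∑ i ∈ Finset.range q.length, v.getD i 0 * q.getD i 0 / 2)
      - ∑ i ∈ Finset.range q.length, ∑ t ∈ Finset.range i,
          v.getD i 0 * q.getD t 0 / 2 ^ (i - t) / 2 := by
  rw [listOverlap, ← Finset.sum_sub_distrib]
  refine Finset.sum_congr rfl ?_
  intro i _
  rw [tseq_eq, mul_sub, sub_div]
  congr 1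
  rw [Finset.mul_sum, Finset.sum_div]
  exact Finset.sum_congr rfl fun t _ => by ring


/-- **duality / reversibility.** Let jobs with processing times
`q = [p_1, …, p_k]` and weights `v = [w_1, …, w_k]` be both
processing-time-inclusive and weight-inclusive, and let `S` be the feasible
synchronized schedule executing them in this order on a single shared
processor.  Then the synchronized schedule `S'` executing, in reversed order,
the jobs whose processing times are the original weights and whose weights are
the original processing times (i.e. `p'_i = w_{k+1-i}`, `w'_i = p_{k+1-i}`,
realized by the lists `v.reverse` and `q.reverse`) is feasible and has the
same total weighted overlap. -/
theorem reverse_dual_schedule_same_overlap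
    (q v : List ℝ) (k : ℕ) (hq : q.length = k) (hv : v.length = k)
    (hqpos : ∀ a ∈ q, (0:ℝ) < a) (hvpos : ∀ a ∈ v, (0:ℝ) < a)
    (hPTIq : PTInclusive q) (hPTIv : PTInclusive v)
    (hfeas : ListFeasible q) :
    ListFeasible v.reverse ∧ listOverlap q v = listOverlap v.reverse q.reverse := by
  constructor
  · refine feasible_of_PTI _ ?_ ?_
    · intro a ha
      exact hvpos a (List.mem_reverse.mp ha)
    · obtain ⟨s, hsp, hss, hlt⟩ := hPTIv
      exact ⟨s, hsp.trans (List.reverse_perm v).symm, hss, hlt⟩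
  · have hvr : v.reverse.length = k := by simp [hv]
    have hqr : q.reverse.length = k := by simp [hq]
    rw [listOverlap_eq, listOverlap_eq, hq, hvr]
    have hA : ∑ i ∈ Finset.range k, (q.reverse).getD i 0 * (v.reverse).getD i 0 / 2
        = ∑ i ∈ Finset.range k, v.getD i 0 * q.getD i 0 / 2 := by
      rw [← Finset.sum_range_reflect (fun i => v.getD i 0 * q.getD i 0 / 2) k]
      refine Finset.sum_congr rfl fun i hi => ?_
      have hik := Finset.mem_range.mp hi
      rw [getD_reverse q i (by omega), getD_reverse v i (by omega), hq, hv]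
      ring
    have hD : (∑ i ∈ Finset.range k, ∑ t ∈ Finset.range i,
          (q.reverse).getD i 0 * (v.reverse).getD t 0 / 2 ^ (i - t) / 2)
        = ∑ i ∈ Finset.range k, ∑ t ∈ Finset.range i,
          v.getD i 0 * q.getD t 0 / 2 ^ (i - t) / 2 := by
      rw [Finset.sum_sigma', Finset.sum_sigma']
      refine Finset.sum_nbij' (fun p => ⟨k - 1 - p.2, k - 1 - p.1⟩)
        (fun p => ⟨k - 1 - p.2, k - 1 - p.1⟩) ?_ ?_ ?_ ?_ ?_
      · rintro ⟨a, b⟩ hp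
        simp only [Finset.mem_sigma, Finset.mem_range] at hp
        obtain ⟨h1, h2⟩ := hp
        refine Finset.mem_sigma.mpr ⟨Finset.mem_range.mpr ?_, Finset.mem_range.mpr ?_⟩
        · show k - 1 - b < k; omega
        · show k - 1 - a < k - 1 - b; omega
      · rintro ⟨a, b⟩ hp
        simp only [Finset.mem_sigma, Finset.mem_range] at hp
        obtain ⟨h1, h2⟩ := hp
        refine Finset.mem_sigma.mpr ⟨Finset.mem_range.mpr ?_, Finset.mem_range.mpr ?_⟩
        · show k - 1 - b < k; omega
        · show k - 1 - a < k - 1 - b; omega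
      · rintro ⟨a, b⟩ hp
        simp only [Finset.mem_sigma, Finset.mem_range] at hp
        obtain ⟨h1, h2⟩ := hp
        show (⟨k - 1 - (k - 1 - a), k - 1 - (k - 1 - b)⟩ : (_ : ℕ) × ℕ) = ⟨a, b⟩
        rw [show k - 1 - (k - 1 - a) = a by omega, show k - 1 - (k - 1 - b) = b by omega]
      · rintro ⟨a, b⟩ hp
        simp only [Finset.mem_sigma, Finset.mem_range] at hp
        obtain ⟨h1, h2⟩ := hp
        show (⟨k - 1 - (k - 1 - a), k - 1 - (k - 1 - b)⟩ : (_ : ℕ) × ℕ) = ⟨a, b⟩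
        rw [show k - 1 - (k - 1 - a) = a by omega, show k - 1 - (k - 1 - b) = b by omega]
      · rintro ⟨a, b⟩ hp
        simp only [Finset.mem_sigma, Finset.mem_range] at hp
        obtain ⟨h1, h2⟩ := hp
        show q.reverse.getD a 0 * v.reverse.getD b 0 / 2 ^ (a - b) / 2
          = v.getD (k - 1 - b) 0 * q.getD (k - 1 - a) 0 / 2 ^ ((k - 1 - b) - (k - 1 - a)) / 2
        rw [getD_reverse q a (by omega), getD_reverse v b (by omega), hq, hv,
          show (k - 1 - b) - (k - 1 - a) = a - b by omega]
        ring
    rw [hA, hD]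
end

section
/- Consider n jobs with unit weights (w_j = 1) and processing times p_1,…,p_n > 0, all to be executed on a single shared processor. (i) If p_1 ≤ p_2 ≤ ⋯ ≤ p_n, then executing the jobs in the order 1,…,n is feasible and the total overlap equals p_n/2 + p_{n−1}/4 + ⋯ + p_1/2^n = Σ_{i=1}^{n} p_i/2^{n+1−i}. (ii) If an ordering of all n jobs on the single shared processor is feasible and maximizes the total overlap among all feasible orderings, then along that ordering the processing times are non-decreasing. -/
/-- Total (unit-weight) overlap of a single shared processor executing jobs
with processing times `q` in this order. -/
noncomputable def unitOverlap (q : List ℝ) : ℝ :=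
  ∑ i ∈ Finset.range q.length, (q.getD i 0 - Tseq q i) / 2

noncomputable def lval : List ℝ → ℝ
  | [] => 0
  | a :: t => a + 2 * lval t

lemma Tseq_cons (a : ℝ) (t : List ℝ) (i : ℕ) :
    Tseq (a :: t) (i + 1) = Tseq t i + a / 2 ^ (i + 1) := by
  induction i with
  | zero => simp [Tseq]
  | succ i ih =>
      show (Tseq (a :: t) (i + 1) + (a :: t).getD (i+1) 0) / 2 = _
      rw [ih, List.getD_cons_succ]
      show _ = (Tseq t i + t.getD i 0) / 2 + a / 2 ^ (i + 1 + 1)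
      have : (2:ℝ) ^ (i+1) ≠ 0 := by positivity
      field_simp
      ring

lemma Tseq_length (q : List ℝ) : Tseq q q.length = lval q / 2 ^ q.length := by
  induction q with
  | nil => simp [Tseq, lval]
  | cons a t ih =>
      show Tseq (a :: t) (t.length + 1) = lval (a :: t) / 2 ^ (t.length + 1)
      rw [Tseq_cons, ih]
      show lval t / 2 ^ t.length + a / 2 ^ (t.length + 1) = (a + 2 * lval t) / 2 ^ (t.length + 1)
      have : (2:ℝ) ^ t.length ≠ 0 := by positivity
      field_simp
      ring

lemma unitOverlap_eq (q : List ℝ) : unitOverlap q = Tseq q q.length := by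
  unfold unitOverlap
  have h : ∀ i, (q.getD i 0 - Tseq q i) / 2 = Tseq q (i + 1) - Tseq q i := by
    intro i
    show _ = (Tseq q i + q.getD i 0) / 2 - Tseq q i
    ring
  simp only [h]
  rw [Finset.sum_range_sub (Tseq q)]
  simp [Tseq]

lemma lval_eq_sum (q : List ℝ) :
    lval q = ∑ i ∈ Finset.range q.length, q.getD i 0 * 2 ^ i := by
  induction q with
  | nil => simp [lval]
  | cons a t ih =>
      show a + 2 * lval t = ∑ i ∈ Finset.range (t.length + 1), (a :: t).getD i 0 * 2 ^ i
      rw [Finset.sum_range_succ', ih, Finset.mul_sum]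
      simp only [List.getD_cons_succ, List.getD_cons_zero, pow_zero, mul_one]
      rw [add_comm]
      congr 1
      apply Finset.sum_congr rfl
      intro i _
      rw [pow_succ]
      ring

lemma lval_append (u w : List ℝ) :
    lval (u ++ w) = lval u + 2 ^ u.length * lval w := by
  induction u with
  | nil => simp [lval]
  | cons a t ih =>
      show lval (a :: (t ++ w)) = lval (a :: t) + 2 ^ (t.length + 1) * lval w
      show a + 2 * lval (t ++ w) = (a + 2 * lval t) + 2 ^ (t.length + 1) * lval w
      rw [ih, pow_succ]
      ring

lemma lval_min_front (b : ℝ) (v : List ℝ) :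
    ∀ u : List ℝ, (∀ x ∈ u, b ≤ x) → lval (u ++ b :: v) ≤ b + 2 * lval (u ++ v) := by
  intro u
  induction u with
  | nil => intro _; simp [lval]
  | cons a t ih =>
      intro h
      have hba : b ≤ a := h a (by simp)
      have ht := ih (fun x hx => h x (by simp [hx]))
      show a + 2 * lval (t ++ b :: v) ≤ b + 2 * (a + 2 * lval (t ++ v))
      nlinarith

lemma lval_le_sorted : ∀ (s l : List ℝ), l.Perm s → s.Pairwise (· ≤ ·) → lval l ≤ lval s := by
  intro s
  induction s with
  | nil => intro l hp _; rw [List.Perm.eq_nil hp]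
  | cons b s' ih =>
      intro l hp hs
      have hb : b ∈ l := hp.mem_iff.mpr (by simp)
      obtain ⟨u, v, rfl⟩ := List.append_of_mem hb
      have hmid : (u ++ b :: v).Perm (b :: (u ++ v)) := List.perm_middle
      have huv : (u ++ v).Perm s' := (hmid.symm.trans hp).cons_inv
      rw [List.pairwise_cons] at hs
      have hbmin : ∀ x ∈ u, b ≤ x := by
        intro x hx
        have hxs : x ∈ b :: s' := hp.mem_iff.mp (by simp [hx])
        rcases List.mem_cons.mp hxs with h | h
        · exact le_of_eq h.symm
        · exact hs.1 x h
      calc lval (u ++ b :: v) ≤ b + 2 * lval (u ++ v) := lval_min_front b v u hbmin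
        _ ≤ b + 2 * lval s' := by
            have := ih (u ++ v) huv hs.2
            linarith
        _ = lval (b :: s') := rfl

lemma sorted_feasible (q : List ℝ) (hpos : ∀ a ∈ q, (0:ℝ) < a)
    (hs : q.Pairwise (· ≤ ·)) : ListFeasible q := by
  intro i hi
  induction i with
  | zero =>
      show (0:ℝ) < q.getD 0 0
      rw [List.getD_eq_getElem q 0 hi]
      exact hpos _ (q.getElem_mem hi)
  | succ i ih =>
      have hi' : i < q.length := Nat.lt_of_succ_lt hi
      have h1 : Tseq q i < q.getD i 0 := ih hi'
      have h2 : q.getD i 0 ≤ q.getD (i+1) 0 := by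
        rw [List.getD_eq_getElem q 0 hi', List.getD_eq_getElem q 0 hi]
        exact List.Pairwise.rel_get_of_lt hs (by simp)
      show (Tseq q i + q.getD i 0) / 2 < q.getD (i+1) 0
      linarith

lemma exists_inversion : ∀ (l : List ℝ), ¬ l.Pairwise (· ≤ ·) →
    ∃ u a b v, l = u ++ a :: b :: v ∧ b < a := by
  intro l
  induction l with
  | nil => intro h; exact absurd List.Pairwise.nil h
  | cons x t ih =>
      intro h
      by_cases ht : t.Pairwise (· ≤ ·)
      · have : ¬ ∀ b ∈ t, x ≤ b := fun hall => h (List.pairwise_cons.mpr ⟨hall, ht⟩)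
        push_neg at this
        obtain ⟨y, hy, hxy⟩ := this
        obtain ⟨c, t', rfl⟩ : ∃ c t', t = c :: t' := by
          cases t with
          | nil => simp at hy
          | cons c t' => exact ⟨c, t', rfl⟩
        have hcy : c ≤ y := by
          rcases List.mem_cons.mp hy with h' | h'
          · exact le_of_eq h'.symm
          · exact (List.pairwise_cons.mp ht).1 y h'
        exact ⟨[], x, c, t', rfl, lt_of_le_of_lt hcy hxy⟩
      · obtain ⟨u, a, b, v, rfl, hab⟩ := ih ht
        exact ⟨x :: u, a, b, v, rfl, hab⟩

/-- Unit weights, one shared processor.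
(i) If the processing times `q` are non-decreasing, then executing the jobs in
this order is feasible and the total overlap equals
`Σ_{i=1}^{n} p_i / 2^(n+1-i)` (0-indexed: `Σ_{i<n} q_i / 2^(n-i)`).
(ii) Any feasible ordering of all the jobs maximizing the total overlap among
all feasible orderings has non-decreasing processing times. -/
theorem unit_weight_single_processor
    (q : List ℝ) (hpos : ∀ a ∈ q, (0:ℝ) < a) :
    (q.Pairwise (· ≤ ·) →
      ListFeasible q ∧
      unitOverlap q = ∑ i ∈ Finset.range q.length, q.getD i 0 / 2 ^ (q.length - i)) ∧
    (∀ q' : List ℝ, q'.Perm q → ListFeasible q' →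
      (∀ q'' : List ℝ, q''.Perm q → ListFeasible q'' →
        unitOverlap q'' ≤ unitOverlap q') →
      q'.Pairwise (· ≤ ·)) := by
  constructor
  · intro hsort
    refine ⟨sorted_feasible q hpos hsort, ?_⟩
    rw [unitOverlap_eq, Tseq_length, lval_eq_sum, Finset.sum_div]
    apply Finset.sum_congr rfl
    intro i hi
    have hi' : i < q.length := Finset.mem_range.mp hi
    have h2 : (2:ℝ) ^ (q.length - i) * 2 ^ i = 2 ^ q.length := pow_sub_mul_pow 2 hi'.le
    rw [div_eq_div_iff (by positivity) (by positivity), ← h2]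
    ring
  · intro q' hperm hfeas hopt
    have hs_sorted : (List.insertionSort (· ≤ ·) q).Pairwise (· ≤ ·) :=
      List.pairwise_insertionSort _ q
    set s := List.insertionSort (· ≤ ·) q with hsdef
    have hs_perm : s.Perm q := List.perm_insertionSort _ q
    have hs_pos : ∀ a ∈ s, (0:ℝ) < a := fun a ha => hpos a (hs_perm.subset ha)
    have hs_feas : ListFeasible s := sorted_feasible s hs_pos hs_sorted
    have hq's : q'.Perm s := hperm.trans hs_perm.symm
    have h1 : unitOverlap s ≤ unitOverlap q' := hopt s hs_perm hs_feas
    have hlen : q'.length = s.length := hq's.length_eq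
    have hv1 : lval q' ≤ lval s := lval_le_sorted s q' hq's hs_sorted
    rw [unitOverlap_eq, unitOverlap_eq, Tseq_length, Tseq_length, hlen] at h1
    have h2pos : (0:ℝ) < 2 ^ s.length := by positivity
    have hv2 : lval s ≤ lval q' := by
      rw [div_le_div_iff₀ h2pos h2pos] at h1
      exact le_of_mul_le_mul_right h1 h2pos
    have heq : lval q' = lval s := le_antisymm hv1 hv2
    by_contra hns
    obtain ⟨u, a, b, v, hsplit, hba⟩ := exists_inversion q' hns
    have hq3perm : (u ++ b :: a :: v).Perm q' := by
      rw [hsplit]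
      exact List.Perm.append_left u (List.Perm.swap a b v)
    have hv3 : lval (u ++ b :: a :: v) ≤ lval s :=
      lval_le_sorted s _ (hq3perm.trans hq's) hs_sorted
    have e1 : lval q' = lval u + 2 ^ u.length * (a + 2 * (b + 2 * lval v)) := by
      rw [hsplit, lval_append]; rfl
    have e2 : lval (u ++ b :: a :: v) = lval u + 2 ^ u.length * (b + 2 * (a + 2 * lval v)) := by
      rw [lval_append]; rfl
    have hupos : (0:ℝ) < 2 ^ u.length := by positivity
    nlinarith [hv3, heq, e1, e2]
end

section
/- Let all jobs have unit weights (w_j = 1) and positive processing times, with m ≥ 1 shared processors. In every optimal feasible synchronized schedule, every job is executed on some shared processor (no job appears on no shared processor). -/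
namespace Aux

/-- Final start time = total overlap (with unit weights). -/
noncomputable def Tfin (q : List ℝ) : ℝ := Tseq q q.length

lemma Tseq_succ (q : List ℝ) (i : ℕ) : Tseq q (i+1) = (Tseq q i + q.getD i 0) / 2 := rfl

lemma Tseq_cons (x : ℝ) (q : List ℝ) (i : ℕ) :
    Tseq (x :: q) (i+1) = Tseq q i + x / 2^(i+1) := by
  induction i with
  | zero =>
      rw [Tseq_succ]
      show (0 + (x :: q).getD 0 0) / 2 = _
      show (0 + x)/2 = Tseq q 0 + x / 2 ^ 1
      show (0 + x)/2 = 0 + x / 2 ^ 1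
      ring
  | succ n ih =>
      rw [Tseq_succ, ih, List.getD_cons_succ, Tseq_succ]
      ring

lemma Tfin_cons (x : ℝ) (q : List ℝ) :
    Tfin (x :: q) = Tfin q + x / 2^(q.length+1) := by
  unfold Tfin
  rw [List.length_cons, Tseq_cons]

lemma listOverlap_ones {J : Type} (p : J → ℝ) (l : List J) :
    listOverlap (l.map p) (l.map fun _ => (1:ℝ)) = Tfin (l.map p) := by
  unfold listOverlap Tfin
  rw [Finset.sum_congr rfl (fun i hi => ?_), Finset.sum_range_sub (Tseq (l.map p))]
  · show Tseq (l.map p) (l.map p).length - Tseq (l.map p) 0 = _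
    show _ - (0:ℝ) = _
    ring
  · rw [Finset.mem_range] at hi
    have hlen : i < (l.map (fun _ => (1:ℝ))).length := by
      rwa [List.length_map, ← List.length_map (f := p)]
    rw [List.getD_eq_getElem _ _ hlen, List.getElem_map]
    rw [Tseq_succ]
    ring

lemma feasible_of_sorted (q : List ℝ) (hpos : ∀ x ∈ q, 0 < x)
    (hs : q.Pairwise (· ≤ ·)) : ListFeasible q := by
  intro i
  induction i with
  | zero =>
      intro hi
      rw [List.getD_eq_getElem _ _ hi]
      exact hpos _ (q.getElem_mem hi)
  | succ n ih =>
      intro hi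
      have hn : n < q.length := Nat.lt_of_succ_lt hi
      have h1 := ih hn
      have h2 : q.getD n 0 ≤ q.getD (n+1) 0 := by
        rw [List.getD_eq_getElem _ _ hn, List.getD_eq_getElem _ _ hi]
        exact List.pairwise_iff_getElem.mp hs n (n+1) hn hi (Nat.lt_succ_self n)
      rw [Tseq_succ]
      linarith

lemma tfin_orderedInsert {J : Type} (p : J → ℝ) (a : J) (l : List J) :
    Tfin (l.map p) + p a / 2^(l.length+1) ≤
      Tfin ((List.orderedInsert (fun a b => p a ≤ p b) a l).map p) := by
  induction l with
  | nil =>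
      apply le_of_eq
      show Tfin [] + p a / 2 ^ 1 = Tfin ([a].map p)
      rw [List.map_singleton, show ([p a] : List ℝ) = p a :: [] from rfl, Tfin_cons]
      norm_num [Tfin, Tseq]
  | cons b t ih =>
      rw [List.orderedInsert]
      split_ifs with hab
      · apply le_of_eq
        rw [List.map_cons, List.map_cons, List.map_cons, Tfin_cons, Tfin_cons, Tfin_cons]
        simp only [List.length_cons, List.length_map]
      · have hba : p b < p a := lt_of_not_ge hab
        rw [List.map_cons, List.map_cons, Tfin_cons, Tfin_cons]
        simp only [List.length_cons, List.length_map, List.orderedInsert_length]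
        set n := t.length with hn
        have hc : (0:ℝ) < 2^(n+1) := by positivity
        have hc2 : (0:ℝ) < 2^(n+2) := by positivity
        have e2 : (2:ℝ)^(n+2) = 2^(n+1) * 2 := by ring
        have hsplit : ∀ x : ℝ, x / 2^(n+1) = x / 2^(n+2) + x / 2^(n+2) := by
          intro x; rw [e2]; field_simp; ring
        have hdiv : p b / 2^(n+2) ≤ p a / 2^(n+2) :=
          (div_le_div_iff_of_pos_right hc2).mpr hba.le
        have := ih
        linarith [hsplit (p a), hsplit (p b)]

lemma tfin_insertionSort {J : Type} (p : J → ℝ) (l : List J) :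
    Tfin (l.map p) ≤ Tfin ((List.insertionSort (fun a b => p a ≤ p b) l).map p) := by
  induction l with
  | nil => simp [List.insertionSort]
  | cons a t ih =>
      rw [List.insertionSort_cons]
      have h1 := tfin_orderedInsert p a (List.insertionSort (fun a b => p a ≤ p b) t)
      rw [List.length_insertionSort] at h1
      rw [List.map_cons, Tfin_cons, List.length_map]
      linarith

end Aux

/-- With unit weights and positive processing times, in every
optimal feasible synchronized schedule every job is executed on some shared
processor. -/
theorem every_job_shared_of_optimal_unit_weights
    {J : Type} [Fintype J] [DecidableEq J] {m : ℕ} (hm : 1 ≤ m)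
    (p : J → ℝ) (hp : ∀ j, 0 < p j)
    (S : SyncSchedule J m) (hopt : S.Optimal p (fun _ => 1)) :
    ∀ j : J, ∃ i : Fin m, j ∈ S.seq i := by
  intro j
  by_contra hj
  push_neg at hj
  classical
  set i0 : Fin m := ⟨0, hm⟩ with hi0
  haveI : IsTotal J (fun a b => p a ≤ p b) := ⟨fun a b => le_total _ _⟩
  haveI : IsTrans J (fun a b => p a ≤ p b) := ⟨fun _ _ _ h1 h2 => le_trans h1 h2⟩
  set L : List J := List.insertionSort (fun a b => p a ≤ p b) (j :: S.seq i0) with hL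
  have hperm : L.Perm (j :: S.seq i0) := List.perm_insertionSort _ _
  have hmemL : ∀ x, x ∈ L ↔ x = j ∨ x ∈ S.seq i0 := by
    intro x; rw [hperm.mem_iff, List.mem_cons]
  have hnodupL : L.Nodup :=
    hperm.symm.nodup (List.nodup_cons.mpr ⟨hj i0, S.nodup i0⟩)
  -- the modified schedule
  set seq' : Fin m → List J := fun i => if i = i0 then L else S.seq i with hseq'
  have hnodup' : ∀ i, (seq' i).Nodup := by
    intro i
    by_cases h : i = i0
    · simp only [hseq']; simp only [h, if_pos rfl]; exact hnodupL
    · simp only [hseq']; simp only [if_neg h]; exact S.nodup i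
  have hdisj' : ∀ i i' x, x ∈ seq' i → x ∈ seq' i' → i = i' := by
    intro i i' x hx hx'
    simp only [hseq'] at hx hx'
    by_cases h1 : i = i0 <;> by_cases h2 : i' = i0
    · rw [h1, h2]
    · rw [if_pos h1] at hx; rw [if_neg h2] at hx'
      rcases (hmemL x).1 hx with rfl | hx0
      · exact absurd hx' (hj i')
      · rw [h1]; exact S.disj i0 i' x hx0 hx'
    · rw [if_neg h1] at hx; rw [if_pos h2] at hx'
      rcases (hmemL x).1 hx' with rfl | hx0
      · exact absurd hx (hj i)
      · rw [h2]; exact S.disj i i0 x hx hx0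
    · rw [if_neg h1] at hx; rw [if_neg h2] at hx'
      exact S.disj i i' x hx hx'
  set S' : SyncSchedule J m := ⟨seq', hnodup', hdisj'⟩ with hS'
  -- feasibility of S'
  have hsortedL : (L.map p).Pairwise (· ≤ ·) := by
    have := List.pairwise_insertionSort (fun a b => p a ≤ p b) (j :: S.seq i0)
    exact List.Pairwise.map p (fun _ _ h => h) this
  have hfeas' : S'.Feasible p := by
    intro i
    show ListFeasible ((seq' i).map p)
    simp only [hseq']
    by_cases h : i = i0
    · simp only [if_pos h]
      refine Aux.feasible_of_sorted _ ?_ hsortedL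
      intro x hx
      rcases List.mem_map.1 hx with ⟨a, _, rfl⟩
      exact hp a
    · simp only [if_neg h]; exact hopt.1 i
  -- the gain on processor i0
  have hgain : Aux.Tfin ((S.seq i0).map p) < Aux.Tfin (L.map p) := by
    have h1 := Aux.tfin_insertionSort p (j :: S.seq i0)
    rw [← hL] at h1
    rw [List.map_cons, Aux.Tfin_cons, List.length_map] at h1
    have h2 : 0 < p j / 2^((S.seq i0).length + 1) := div_pos (hp j) (by positivity)
    linarith
  -- comparing Omegas
  have hOmega : ∀ (T : SyncSchedule J m),
      T.Omega p (fun _ => 1) = ∑ i, Aux.Tfin ((T.seq i).map p) := by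
    intro T
    exact Finset.sum_congr rfl (fun i _ => Aux.listOverlap_ones p (T.seq i))
  have hlt : S.Omega p (fun _ => 1) < S'.Omega p (fun _ => 1) := by
    rw [hOmega, hOmega]
    apply Finset.sum_lt_sum
    · intro i _
      show Aux.Tfin ((S.seq i).map p) ≤ Aux.Tfin ((seq' i).map p)
      simp only [hseq']
      by_cases h : i = i0
      · simp only [if_pos h]; rw [h]; exact hgain.le
      · simp only [if_neg h]; exact le_refl _
    · refine ⟨i0, Finset.mem_univ _, ?_⟩
      show Aux.Tfin ((S.seq i0).map p) < Aux.Tfin ((seq' i0).map p)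
      simp only [hseq', if_pos rfl]
      exact hgain
  exact absurd (hopt.2 S' hfeas') (not_le.mpr hlt)
end

section
/- Let n jobs have unit weights (w_j = 1) and positive processing times, and let m ≥ 1 shared processors be available. Let p_{(1)} ≥ p_{(2)} ≥ ⋯ ≥ p_{(n)} be the processing times arranged in non-increasing order. Then the maximum total weighted overlap over all feasible synchronized schedules equals Σ_{i=1}^{n} p_{(i)}/2^{⌈i/m⌉}; in particular, for every partition of the jobs into m groups with the ℓ-th group of size n_ℓ and its processing times sorted ascending q^ℓ_1 ≤ ⋯ ≤ q^ℓ_{n_ℓ}, one has Σ_{ℓ=1}^{m} Σ_{i=1}^{n_ℓ} q^ℓ_i/2^{n_ℓ+1−i} ≤ Σ_{i=1}^{n} p_{(i)}/2^{⌈i/m⌉}, and this bound is attained. -/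
open Finset

lemma Tseq_congr (q q' : List ℝ) : ∀ i, (∀ j, j < i → q.getD j 0 = q'.getD j 0) →
    Tseq q i = Tseq q' i
  | 0, _ => rfl
  | i + 1, h => by
    rw [Tseq, Tseq, Tseq_congr q q' i (fun j hj => h j (Nat.lt_succ_of_lt hj)),
      h i (Nat.lt_succ_self i)]

lemma Tseq_eq (q : List ℝ) : ∀ k, Tseq q k = ∑ i ∈ range k, q.getD i 0 / 2 ^ (k - i)
  | 0 => by simp [Tseq]
  | k + 1 => by
    rw [Tseq, Tseq_eq q k, Finset.sum_range_succ]
    rw [add_div, Finset.sum_div]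
    congr 1
    · apply Finset.sum_congr rfl
      intro i hi
      rw [Finset.mem_range] at hi
      rw [div_div, ← pow_succ, Nat.sub_add_comm hi.le]
    · simp

lemma listOverlap_ones {J : Type} (p : J → ℝ) (l : List J) :
    listOverlap (l.map p) (l.map fun _ => (1:ℝ)) = Tseq (l.map p) l.length := by
  unfold listOverlap
  rw [List.length_map]
  have h1 : ∀ i ∈ range l.length,
      (l.map fun _ => (1:ℝ)).getD i 0 * ((l.map p).getD i 0 - Tseq (l.map p) i) / 2
        = Tseq (l.map p) (i + 1) - Tseq (l.map p) i := by
    intro i hi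
    rw [Finset.mem_range] at hi
    have : (l.map fun _ => (1:ℝ)).getD i 0 = 1 := by
      rw [List.getD_eq_getElem?_getD, List.getElem?_map]
      have : l[i]? = some l[i] := List.getElem?_eq_getElem hi
      rw [this]; rfl
    rw [this, one_mul, Tseq]
    ring
  rw [Finset.sum_congr rfl h1, Finset.sum_range_sub]
  simp [Tseq]

lemma sum_range_getD (l : List ℝ) : ∀ k, ∑ i ∈ range k, l.getD i 0 = (l.take k).sum
  | 0 => by simp
  | k + 1 => by
    rw [Finset.sum_range_succ, sum_range_getD l k]
    by_cases h : k < l.length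
    · rw [List.sum_take_succ _ _ h, List.getD_eq_getElem?_getD,
        List.getElem?_eq_getElem h]
      rfl
    · push_neg at h
      rw [List.take_of_length_le h, List.take_of_length_le (le_trans h (Nat.le_succ k)),
        List.getD_eq_getElem?_getD, List.getElem?_eq_none h]
      simp

lemma geo_sum : ∀ N s, s ≤ N → ∑ t ∈ Finset.Ico s N, ((1:ℝ) / 2 ^ (t + 1)) = 1 / 2 ^ s - 1 / 2 ^ N := by
  intro N
  induction N with
  | zero => intro s hs; interval_cases s; simp
  | succ N ih =>
    intro s hs
    rcases Nat.lt_or_ge s (N+1) with h | h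
    · have hsN : s ≤ N := Nat.lt_succ_iff.mp h
      rw [Finset.sum_Ico_succ_top hsN, ih s hsN]
      have : (2:ℝ) ^ (N+1) = 2 ^ N * 2 := by ring
      rw [this]
      field_simp
      ring
    · have : s = N + 1 := le_antisymm hs h
      subst this; simp

lemma take_sum_le : ∀ (k : ℕ) (a : ℝ) (d : List ℝ), (∀ x ∈ d, x ≤ a) → d.Pairwise (· ≥ ·) →
    (∀ x ∈ d, 0 ≤ x) → 0 ≤ a → (d.take k).sum ≤ ((a :: d).take k).sum
  | 0, _, _, _, _, _, _ => le_refl _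
  | k + 1, a, d, h, hd, hnn, ha => by
    cases d with
    | nil => rw [List.take_succ_cons]; simpa using ha
    | cons b d' =>
      rw [List.take_succ_cons, List.take_succ_cons, List.sum_cons, List.sum_cons]
      have hba : b ≤ a := h b (List.mem_cons_self)
      have h1 : (d'.take k).sum ≤ ((b :: d').take k).sum :=
        take_sum_le k b d' (fun x hx => (List.pairwise_cons.mp hd).1 x hx)
          (List.pairwise_cons.mp hd).2 (fun x hx => hnn x (List.mem_cons_of_mem _ hx))
          (hnn b (List.mem_cons_self))
      linarith

lemma sublist_sum_le : ∀ (l d : List ℝ), List.Sublist l d → d.Pairwise (· ≥ ·) → (∀ x ∈ d, 0 ≤ x) →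
    l.sum ≤ (d.take l.length).sum := by
  intro l d h
  induction h with
  | slnil => intro _ _; simp
  | @cons l' d' a h ih =>
    intro hs hnn
    have h2 := ih (List.pairwise_cons.mp hs).2 (fun x hx => hnn x (List.mem_cons_of_mem _ hx))
    refine h2.trans (take_sum_le _ a d' (fun x hx => (List.pairwise_cons.mp hs).1 x hx)
      (List.pairwise_cons.mp hs).2 (fun x hx => hnn x (List.mem_cons_of_mem _ hx))
      (hnn a (List.mem_cons_self)))
  | @cons_cons l' d' a h ih =>
    intro hs hnn
    rw [List.length_cons, List.take_succ_cons, List.sum_cons, List.sum_cons]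
    have h2 := ih (List.pairwise_cons.mp hs).2 (fun x hx => hnn x (List.mem_cons_of_mem _ hx))
    linarith

lemma getD_nonneg {d : List ℝ} (hnn : ∀ x ∈ d, 0 ≤ x) (i : ℕ) : 0 ≤ d.getD i 0 := by
  rcases Nat.lt_or_ge i d.length with h | h
  · rw [List.getD_eq_getElem?_getD, List.getElem?_eq_getElem h]
    exact hnn _ (List.getElem_mem h)
  · rw [List.getD_eq_getElem?_getD, List.getElem?_eq_none h]; rfl

lemma topk {J : Type} [Fintype J] [DecidableEq J] (p : J → ℝ) (d : List ℝ)
    (hperm : d.Perm (Finset.univ.toList.map p)) (hsorted : d.Pairwise (· ≥ ·))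
    (hnn : ∀ x ∈ d, 0 ≤ x)
    (A : Finset J) (k : ℕ) (hk : A.card ≤ k) :
    ∑ j ∈ A, p j ≤ ∑ i ∈ range k, d.getD i 0 := by
  have hle : ((A.toList.map p : List ℝ) : Multiset ℝ) ≤ (d : Multiset ℝ) := by
    have h1 : (A.val.map p) ≤ (Finset.univ.val.map p) :=
      Multiset.map_le_map (Finset.val_le_iff.mpr (Finset.subset_univ A))
    have h2 : (A.val.map p) = ((A.toList.map p : List ℝ) : Multiset ℝ) := by
      rw [← Finset.coe_toList A]; rfl
    have h3 : (Finset.univ.val.map p) = (d : Multiset ℝ) := by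
      rw [← Finset.coe_toList (Finset.univ : Finset J)]
      exact (Multiset.coe_eq_coe.mpr hperm).symm
    rw [← h2, ← h3]
    exact h1
  obtain ⟨l', hl'p, hl's⟩ := Multiset.coe_le.mp hle
  have hsum : ∑ j ∈ A, p j = l'.sum := by
    rw [hl'p.sum_eq]
    rw [Finset.sum, ← Finset.coe_toList A]
    rfl
  rw [hsum]
  have h4 := sublist_sum_le l' d hl's hsorted hnn
  have h5 : l'.length = A.card := by
    rw [hl'p.length_eq, List.length_map, Finset.length_toList]
  refine h4.trans ?_
  rw [← sum_range_getD]
  apply Finset.sum_le_sum_of_subset_of_nonneg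
  · exact Finset.range_subset_range.mpr (h5 ▸ hk)
  · intro i _ _; exact getD_nonneg hnn i

lemma abel_q (q : List ℝ) (k N : ℕ) (hk : k ≤ N) :
    ∑ t ∈ Finset.Ico 1 N, (∑ i ∈ Finset.Ico (k - t) k, q.getD i 0) / 2 ^ (t + 1)
      + (∑ i ∈ range k, q.getD i 0) / 2 ^ N
    = ∑ i ∈ range k, q.getD i 0 / 2 ^ (k - i) := by
  have key : ∑ t ∈ Finset.Ico 1 N, (∑ i ∈ Finset.Ico (k - t) k, q.getD i 0) / 2 ^ (t + 1)
      = ∑ i ∈ range k, (q.getD i 0 / 2 ^ (k - i) - q.getD i 0 / 2 ^ N) := by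
    have h1 : ∀ t : ℕ, (∑ i ∈ Finset.Ico (k - t) k, q.getD i 0) / 2 ^ (t+1)
        = ∑ i ∈ range k, (if k - t ≤ i then q.getD i 0 / 2 ^ (t+1) else 0) := by
      intro t
      rw [Finset.sum_div, ← Finset.sum_filter]
      apply Finset.sum_congr _ (fun _ _ => rfl)
      ext i
      simp only [Finset.mem_Ico, Finset.mem_filter, Finset.mem_range]
      omega
    rw [Finset.sum_congr rfl (fun t _ => h1 t), Finset.sum_comm]
    apply Finset.sum_congr rfl
    intro i hi
    rw [Finset.mem_range] at hi
    have h2 : (Finset.Ico 1 N).filter (fun t => k - t ≤ i) = Finset.Ico (k - i) N := by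
      ext t
      simp only [Finset.mem_Ico, Finset.mem_filter]
      omega
    rw [← Finset.sum_filter, h2]
    have h3 : ∀ t ∈ Finset.Ico (k - i) N, q.getD i 0 / 2 ^ (t+1)
        = q.getD i 0 * (1 / 2 ^ (t+1)) := fun t _ => div_eq_mul_one_div _ _
    rw [Finset.sum_congr rfl h3, ← Finset.mul_sum, geo_sum N (k - i) (le_trans (Nat.sub_le k i) hk)]
    rw [mul_sub, mul_one_div, mul_one_div]
  rw [key, Finset.sum_sub_distrib, Finset.sum_div]
  ring

lemma sum_getD_extend (l : List ℝ) (e : ℕ → ℕ) {K : ℕ} (hK : l.length ≤ K) :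
    ∑ i ∈ range K, l.getD i 0 / 2 ^ (e i) = ∑ i ∈ range l.length, l.getD i 0 / 2 ^ (e i) := by
  symm
  apply Finset.sum_subset (Finset.range_subset_range.mpr hK)
  intro i _ hi
  rw [Finset.mem_range, not_lt] at hi
  rw [List.getD_eq_getElem?_getD, List.getElem?_eq_none hi]
  simp

lemma abel_B (m : ℕ) (hm : 1 ≤ m) (d : List ℝ) (N : ℕ) (hN : d.length ≤ m * N) :
    ∑ t ∈ Finset.Ico 1 N, (∑ i ∈ range (m * t), d.getD i 0) / 2 ^ (t + 1)
      + (∑ i ∈ range (m * N), d.getD i 0) / 2 ^ N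
    = ∑ i ∈ range d.length, d.getD i 0 / 2 ^ ((i + m) / m) := by
  have hm0 : 0 < m := hm
  have hcond : ∀ i t : ℕ, (i < m * t ↔ (i + m) / m ≤ t) := by
    intro i t
    rw [Nat.add_div_right i hm0, Nat.succ_le_iff, Nat.div_lt_iff_lt_mul hm0, mul_comm]
  have key : ∑ t ∈ Finset.Ico 1 N, (∑ i ∈ range (m * t), d.getD i 0) / 2 ^ (t + 1)
      = ∑ i ∈ range (m * N), (d.getD i 0 / 2 ^ ((i + m) / m) - d.getD i 0 / 2 ^ N) := by
    have h1 : ∀ t ∈ Finset.Ico 1 N, (∑ i ∈ range (m * t), d.getD i 0) / 2 ^ (t + 1)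
        = ∑ i ∈ range (m * N), (if (i + m) / m ≤ t then d.getD i 0 / 2 ^ (t + 1) else 0) := by
      intro t ht
      rw [Finset.mem_Ico] at ht
      rw [Finset.sum_div, ← Finset.sum_filter]
      apply Finset.sum_congr _ (fun _ _ => rfl)
      ext i
      simp only [Finset.mem_filter, Finset.mem_range, ← hcond]
      constructor
      · intro h
        exact ⟨lt_of_lt_of_le h (Nat.mul_le_mul_left m ht.2.le), h⟩
      · exact fun h => h.2
    rw [Finset.sum_congr rfl h1, Finset.sum_comm]
    apply Finset.sum_congr rfl
    intro i hi
    rw [Finset.mem_range] at hi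
    have hei : (i + m) / m ≤ N := by
      rw [Nat.add_div_right i hm0, Nat.succ_le_iff, Nat.div_lt_iff_lt_mul hm0, mul_comm]
      exact hi
    have hei1 : 1 ≤ (i + m) / m := by
      rw [Nat.add_div_right i hm0]
      exact Nat.succ_le_succ (Nat.zero_le _)
    have h2 : (Finset.Ico 1 N).filter (fun t => (i + m) / m ≤ t) = Finset.Ico ((i + m) / m) N := by
      ext t
      simp only [Finset.mem_Ico, Finset.mem_filter]
      omega
    rw [← Finset.sum_filter, h2]
    have h3 : ∀ t ∈ Finset.Ico ((i + m) / m) N, d.getD i 0 / 2 ^ (t + 1)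
        = d.getD i 0 * (1 / 2 ^ (t + 1)) := fun t _ => div_eq_mul_one_div _ _
    rw [Finset.sum_congr rfl h3, ← Finset.mul_sum, geo_sum N _ hei]
    rw [mul_sub, mul_one_div, mul_one_div]
  rw [key, Finset.sum_sub_distrib, Finset.sum_div,
    sum_getD_extend d (fun i => (i + m) / m) hN]
  ring

lemma ico_sum_drop {J : Type} (p : J → ℝ) (l : List J) (a : ℕ) (ha : a ≤ l.length) :
    ∑ i ∈ Finset.Ico a l.length, (l.map p).getD i 0 = ((l.drop a).map p).sum := by
  rw [Finset.sum_Ico_eq_sub _ ha, sum_range_getD, sum_range_getD,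
    List.take_of_length_le (by rw [List.length_map])]
  have := List.sum_take_add_sum_drop (l.map p) a
  rw [← List.map_drop] at this
  linarith

lemma key_ineq {J : Type} [Fintype J] [DecidableEq J] {m : ℕ}
    (p : J → ℝ) (d : List ℝ)
    (hperm : d.Perm (Finset.univ.toList.map p))
    (hsorted : d.Pairwise (· ≥ ·)) (hnn : ∀ x ∈ d, 0 ≤ x)
    (S : SyncSchedule J m) (t : ℕ) :
    ∑ ℓ : Fin m, ∑ i ∈ Finset.Ico (((S.seq ℓ).map p).length - t) ((S.seq ℓ).map p).length,
        ((S.seq ℓ).map p).getD i 0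
      ≤ ∑ i ∈ range (m * t), d.getD i 0 := by
  have h1 : ∀ ℓ : Fin m, ∑ i ∈ Finset.Ico (((S.seq ℓ).map p).length - t) ((S.seq ℓ).map p).length,
      ((S.seq ℓ).map p).getD i 0 = ∑ j ∈ ((S.seq ℓ).drop ((S.seq ℓ).length - t)).toFinset, p j := by
    intro ℓ
    rw [List.length_map, ico_sum_drop p _ _ (Nat.sub_le _ _)]
    exact (List.sum_toFinset p (((S.nodup ℓ).sublist (List.drop_sublist _ _)))).symm
  rw [Finset.sum_congr rfl (fun ℓ _ => h1 ℓ)]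
  have hdisj : ((Finset.univ : Finset (Fin m)) : Set (Fin m)).PairwiseDisjoint
      (fun ℓ => ((S.seq ℓ).drop ((S.seq ℓ).length - t)).toFinset) := by
    intro a _ b _ hab
    simp only [Function.onFun, Finset.disjoint_left]
    intro j hja hjb
    rw [List.mem_toFinset] at hja hjb
    exact hab (S.disj a b j (List.mem_of_mem_drop hja) (List.mem_of_mem_drop hjb))
  rw [← Finset.sum_biUnion hdisj]
  apply topk p d hperm hsorted hnn
  calc (Finset.univ.biUnion fun ℓ => ((S.seq ℓ).drop ((S.seq ℓ).length - t)).toFinset).card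
      ≤ ∑ ℓ : Fin m, ((S.seq ℓ).drop ((S.seq ℓ).length - t)).toFinset.card :=
        Finset.card_biUnion_le
    _ ≤ ∑ _ℓ : Fin m, t := by
        apply Finset.sum_le_sum
        intro ℓ _
        calc ((S.seq ℓ).drop ((S.seq ℓ).length - t)).toFinset.card
            ≤ ((S.seq ℓ).drop ((S.seq ℓ).length - t)).length := (List.toFinset_card_le _)
          _ ≤ t := by rw [List.length_drop]; omega
    _ = m * t := by simp [mul_comm]

lemma omega_le {J : Type} [Fintype J] [DecidableEq J] {m : ℕ} (hm : 1 ≤ m)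
    (p : J → ℝ) (hp : ∀ j, 0 < p j) (d : List ℝ)
    (hperm : d.Perm (Finset.univ.toList.map p)) (hsorted : d.Pairwise (· ≥ ·))
    (S : SyncSchedule J m) :
    S.Omega p (fun _ => 1) ≤ ∑ i ∈ range d.length, d.getD i 0 / 2 ^ ((i + m) / m) := by
  classical
  have hnn : ∀ x ∈ d, 0 ≤ x := by
    intro x hx
    rw [hperm.mem_iff, List.mem_map] at hx
    obtain ⟨j, _, rfl⟩ := hx
    exact (hp j).le
  have hcard : Fintype.card J = d.length := by
    rw [hperm.length_eq, List.length_map, Finset.length_toList, Finset.card_univ]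
  set n := d.length with hn
  set N := n + 1 with hNdef
  have hlen : ∀ ℓ : Fin m, ((S.seq ℓ).map p).length ≤ n := fun ℓ => by
    rw [List.length_map]; exact hcard ▸ (S.nodup ℓ).length_le_card
  have homega : S.Omega p (fun _ => 1)
      = ∑ ℓ : Fin m, (∑ t ∈ Finset.Ico 1 N,
          (∑ i ∈ Finset.Ico (((S.seq ℓ).map p).length - t) ((S.seq ℓ).map p).length,
            ((S.seq ℓ).map p).getD i 0) / 2 ^ (t + 1)
        + (∑ i ∈ range (((S.seq ℓ).map p).length), ((S.seq ℓ).map p).getD i 0) / 2 ^ N) := by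
    unfold SyncSchedule.Omega
    apply Finset.sum_congr rfl
    intro ℓ _
    rw [listOverlap_ones,
      show (S.seq ℓ).length = ((S.seq ℓ).map p).length from (List.length_map _).symm,
      Tseq_eq, ← abel_q _ _ N ((hlen ℓ).trans (Nat.le_succ n))]
  rw [homega, Finset.sum_add_distrib, Finset.sum_comm,
    ← abel_B m hm d N (by rw [hNdef]; nlinarith [hm])]
  apply add_le_add
  · apply Finset.sum_le_sum
    intro t _
    rw [← Finset.sum_div]
    gcongr
    exact key_ineq p d hperm hsorted hnn S t
  · rw [← Finset.sum_div]
    gcongr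
    have h := key_ineq p d hperm hsorted hnn S N
    have heq : ∀ ℓ : Fin m,
        ∑ i ∈ Finset.Ico (((S.seq ℓ).map p).length - N) (((S.seq ℓ).map p).length),
          ((S.seq ℓ).map p).getD i 0
        = ∑ i ∈ range (((S.seq ℓ).map p).length), ((S.seq ℓ).map p).getD i 0 := by
      intro ℓ
      rw [Nat.sub_eq_zero_of_le ((hlen ℓ).trans (Nat.le_succ n)), ← Finset.range_eq_Ico]
    rw [← Finset.sum_congr rfl (fun ℓ _ => heq ℓ)]
    exact h

lemma map_erase_perm {J : Type} [DecidableEq J] (p : J → ℝ) :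
    ∀ (l : List J) (j : J), j ∈ l → ((l.erase j).map p).Perm ((l.map p).erase (p j))
  | [], j, hj => by simp at hj
  | b :: l, j, hj => by
    by_cases hbj : b = j
    · subst hbj
      rw [List.erase_cons_head, List.map_cons, List.erase_cons_head]
    · rw [List.erase_cons_tail (by simp [hbj]), List.map_cons, List.map_cons]
      have hjl : j ∈ l := by
        rcases List.mem_cons.mp hj with h | h
        · exact absurd h.symm hbj
        · exact h
      by_cases hpb : p b = p j
      · rw [hpb, List.erase_cons_head]
        exact ((map_erase_perm p l j hjl).cons (p j)).trans
          (List.perm_cons_erase (List.mem_map_of_mem hjl)).symm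
      · rw [List.erase_cons_tail (by simp [hpb])]
        exact (map_erase_perm p l j hjl).cons _

lemma exists_list_map {J : Type} [DecidableEq J] (p : J → ℝ) :
    ∀ (d : List ℝ) (l : List J), d.Perm (l.map p) → ∃ L : List J, L.Perm l ∧ L.map p = d
  | [], l, h => by
    have : l.map p = [] := (h.symm).eq_nil
    exact ⟨[], by simp [List.map_eq_nil_iff.mp this], rfl⟩
  | a :: d', l, h => by
    have ha : a ∈ l.map p := h.mem_iff.mp (List.mem_cons_self)
    obtain ⟨j, hjl, hja⟩ := List.mem_map.mp ha
    have h2 : d'.Perm ((l.map p).erase a) :=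
      (h.trans (List.perm_cons_erase ha)).cons_inv
    have h3 : d'.Perm ((l.erase j).map p) := by
      rw [← hja] at h2
      exact h2.trans (map_erase_perm p l j hjl).symm
    obtain ⟨L', hL'p, hL'm⟩ := exists_list_map p d' (l.erase j) h3
    refine ⟨j :: L', ?_, by rw [List.map_cons, hL'm, hja]⟩
    exact (hL'p.cons j).trans (List.perm_cons_erase hjl).symm

lemma feasible_of_sorted_pos (q : List ℝ) (hs : q.Pairwise (· ≤ ·)) (hpos : ∀ x ∈ q, 0 < x) :
    ListFeasible q := by
  intro i hi
  induction i with
  | zero =>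
    rw [List.getD_eq_getElem _ _ hi]
    exact hpos _ (List.getElem_mem hi)
  | succ i ih =>
    have hi' : i < q.length := Nat.lt_of_succ_lt hi
    have h1 : Tseq q i < q.getD i 0 := ih hi'
    have h2 : q.getD i 0 ≤ q.getD (i+1) 0 := by
      rw [List.getD_eq_getElem _ _ hi', List.getD_eq_getElem _ _ hi]
      exact List.pairwise_iff_getElem.mp hs i (i+1) hi' hi (Nat.lt_succ_self i)
    have h3 : 0 < q.getD i 0 := by
      rw [List.getD_eq_getElem _ _ hi']
      exact hpos _ (List.getElem_mem hi')
    rw [Tseq]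
    rw [List.getD_eq_getElem _ _ hi'] at h1 h2 ⊢
    rw [List.getD_eq_getElem _ _ hi] at h2 ⊢
    linarith

def buildSeq {J : Type} (m : ℕ) : List J → Fin m → List J
  | [], _ => []
  | (a :: L), ℓ => buildSeq m ((a :: L).drop (max m 1)) ℓ ++ ((a :: L)[(ℓ : ℕ)]?).toList
termination_by L _ => L.length
decreasing_by
  rw [List.length_drop]
  simp only [List.length_cons]
  omega

lemma buildSeq_nil {J : Type} (m : ℕ) (ℓ : Fin m) : buildSeq m ([] : List J) ℓ = [] := by
  rw [buildSeq]

lemma buildSeq_cons {J : Type} (m : ℕ) (hm : 1 ≤ m) (a : J) (L : List J) (ℓ : Fin m) :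
    buildSeq m (a :: L) ℓ
      = buildSeq m ((a :: L).drop m) ℓ ++ ((a :: L)[(ℓ : ℕ)]?).toList := by
  rw [buildSeq, Nat.max_eq_left hm]

lemma mem_buildSeq {J : Type} (m : ℕ) :
    ∀ (L : List J) (ℓ : Fin m) (j : J), j ∈ buildSeq m L ℓ → j ∈ L
  | [], ℓ, j => by simp [buildSeq_nil]
  | (a :: L), ℓ, j => by
    rw [buildSeq]
    intro h
    rcases List.mem_append.mp h with h | h
    · exact List.mem_of_mem_drop (mem_buildSeq m _ ℓ j h)
    · rw [Option.mem_toList] at h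
      obtain ⟨hlt, rfl⟩ := List.getElem?_eq_some_iff.mp h
      exact List.getElem_mem hlt
termination_by L _ _ => L.length
decreasing_by
  rw [List.length_drop]
  simp only [List.length_cons]
  omega

lemma mem_take_of_opt {J : Type} {m : ℕ} (a : J) (L : List J) (ℓ : Fin m) (j : J)
    (h : j ∈ ((a :: L)[(ℓ : ℕ)]?).toList) : j ∈ (a :: L).take (max m 1) := by
  rw [Option.mem_toList] at h
  obtain ⟨hlt, rfl⟩ := List.getElem?_eq_some_iff.mp h
  have hℓm : (ℓ : ℕ) < max m 1 := lt_of_lt_of_le ℓ.isLt (le_max_left m 1)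
  have hlen : (ℓ : ℕ) < ((a :: L).take (max m 1)).length := by
    rw [List.length_take]; omega
  have : ((a :: L).take (max m 1))[(ℓ : ℕ)] = (a :: L)[(ℓ : ℕ)] := List.getElem_take
  exact this ▸ List.getElem_mem hlen

lemma disjoint_take_drop {J : Type} (L : List J) (hnd : L.Nodup) (M : ℕ) :
    (L.take M).Disjoint (L.drop M) := by
  have h := hnd
  rw [← List.take_append_drop M L, List.nodup_append] at h
  exact fun a ha hb => h.2.2 a ha a hb rfl

lemma nodup_buildSeq {J : Type} (m : ℕ) :
    ∀ (L : List J), L.Nodup → ∀ ℓ : Fin m, (buildSeq m L ℓ).Nodup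
  | [] => by simp [buildSeq_nil]
  | (a :: L) => by
    intro hnd ℓ
    rw [buildSeq]
    apply List.Nodup.append
    · exact nodup_buildSeq m _ ((List.drop_sublist _ _).nodup hnd) ℓ
    · cases h : ((a :: L)[(ℓ : ℕ)]?) <;> simp
    · intro j hj1 hj2
      exact disjoint_take_drop (a :: L) hnd (max m 1)
        (mem_take_of_opt a L ℓ j hj2) (mem_buildSeq m _ ℓ j hj1)
termination_by L => L.length
decreasing_by
  rw [List.length_drop]
  simp only [List.length_cons]
  omega

lemma disj_buildSeq {J : Type} (m : ℕ) :
    ∀ (L : List J), L.Nodup → ∀ (ℓ ℓ' : Fin m) (j : J),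
      j ∈ buildSeq m L ℓ → j ∈ buildSeq m L ℓ' → ℓ = ℓ'
  | [] => by simp [buildSeq_nil]
  | (a :: L) => by
    intro hnd ℓ ℓ' j h h'
    rw [buildSeq] at h h'
    have hnd' : ((a :: L).drop (max m 1)).Nodup := (List.drop_sublist _ _).nodup hnd
    rcases List.mem_append.mp h with h1 | h1 <;> rcases List.mem_append.mp h' with h2 | h2
    · exact disj_buildSeq m _ hnd' ℓ ℓ' j h1 h2
    · exact absurd (mem_buildSeq m _ ℓ j h1)
        (fun hc => disjoint_take_drop (a :: L) hnd (max m 1) (mem_take_of_opt a L ℓ' j h2) hc)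
    · exact absurd (mem_buildSeq m _ ℓ' j h2)
        (fun hc => disjoint_take_drop (a :: L) hnd (max m 1) (mem_take_of_opt a L ℓ j h1) hc)
    · rw [Option.mem_toList] at h1 h2
      obtain ⟨hlt1, he1⟩ := List.getElem?_eq_some_iff.mp h1
      obtain ⟨hlt2, he2⟩ := List.getElem?_eq_some_iff.mp h2
      have : (ℓ : ℕ) = (ℓ' : ℕ) := (hnd.getElem_inj_iff).mp (he1.trans he2.symm)
      exact Fin.ext this
termination_by L => L.length
decreasing_by
  rw [List.length_drop]
  simp only [List.length_cons]
  omega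

lemma sorted_buildSeq {J : Type} (m : ℕ) (p : J → ℝ) :
    ∀ (L : List J), (L.map p).Pairwise (· ≥ ·) → ∀ ℓ : Fin m,
      ((buildSeq m L ℓ).map p).Pairwise (· ≤ ·)
  | [] => by simp [buildSeq_nil]
  | (a :: L) => by
    intro hs ℓ
    rw [buildSeq, List.map_append]
    have hsdrop : (((a :: L).drop (max m 1)).map p).Pairwise (· ≥ ·) := by
      rw [List.map_drop]
      exact hs.sublist (List.drop_sublist _ _)
    rw [List.pairwise_append]
    refine ⟨sorted_buildSeq m p _ hsdrop ℓ, ?_, ?_⟩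
    · cases h : ((a :: L)[(ℓ : ℕ)]?) <;> simp
    · intro x hx y hy
      rw [List.mem_map] at hx hy
      obtain ⟨u, hu, rfl⟩ := hx
      obtain ⟨v, hv, rfl⟩ := hy
      rw [Option.mem_toList] at hv
      obtain ⟨hlt, rfl⟩ := List.getElem?_eq_some_iff.mp hv
      have hu' := mem_buildSeq m _ ℓ u hu
      obtain ⟨s, hs', hsu⟩ := List.mem_iff_getElem.mp hu'
      rw [List.length_drop] at hs'
      have hidx : u = (a :: L)[max m 1 + s]'(by omega) := by
        rw [← hsu, List.getElem_drop]
      have hℓm : (ℓ : ℕ) < max m 1 := lt_of_lt_of_le ℓ.isLt (le_max_left m 1)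
      have hrel := List.pairwise_iff_getElem.mp hs (ℓ : ℕ) (max m 1 + s)
        (by rw [List.length_map]; omega) (by rw [List.length_map]; omega) (by omega)
      rw [List.getElem_map, List.getElem_map] at hrel
      rw [hidx]
      exact hrel
termination_by L => L.length
decreasing_by
  rw [List.length_drop]
  simp only [List.length_cons]
  omega

lemma Tseq_append (q : List ℝ) (x : ℝ) :
    Tseq (q ++ [x]) (q ++ [x]).length = (Tseq q q.length + x) / 2 := by
  have hlen : (q ++ [x]).length = q.length + 1 := by simp
  rw [hlen, Tseq]
  congr 1
  congr 1
  · exact Tseq_congr _ _ _ (fun j hj => List.getD_append q [x] 0 j hj)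
  · rw [List.getD_eq_getElem?_getD, List.getElem?_append_right (le_refl _)]
    simp

lemma Ov_buildSeq_cons {J : Type} (m : ℕ) (hm : 1 ≤ m) (p : J → ℝ) (a : J) (L : List J)
    (ℓ : Fin m) :
    Tseq ((buildSeq m (a :: L) ℓ).map p) ((buildSeq m (a :: L) ℓ).map p).length
      = (Tseq ((buildSeq m ((a :: L).drop m) ℓ).map p)
            ((buildSeq m ((a :: L).drop m) ℓ).map p).length
         + ((a :: L).map p).getD (ℓ : ℕ) 0) / 2 := by
  rw [buildSeq_cons m hm]
  by_cases hlt : (ℓ : ℕ) < (a :: L).length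
  · rw [List.getElem?_eq_getElem hlt]
    have hopt : (some (a :: L)[(ℓ : ℕ)]).toList = [(a :: L)[(ℓ : ℕ)]] := rfl
    rw [hopt, List.map_append, List.map_cons, List.map_nil, Tseq_append]
    congr 2
    rw [List.getD_eq_getElem _ _ (by rw [List.length_map]; exact hlt), List.getElem_map]
  · push_neg at hlt
    rw [List.getElem?_eq_none hlt]
    have hdrop : (a :: L).drop m = [] := List.drop_eq_nil_of_le (le_trans hlt ℓ.isLt.le)
    rw [hdrop, buildSeq_nil, List.getD_eq_getElem?_getD,
      List.getElem?_eq_none (by rw [List.length_map]; exact hlt)]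
    simp [Tseq]

lemma B_rec (m : ℕ) (hm : 1 ≤ m) (e : List ℝ) :
    ∑ i ∈ range e.length, e.getD i 0 / 2 ^ ((i + m) / m)
      = ((∑ i ∈ range m, e.getD i 0)
          + ∑ i ∈ range (e.drop m).length, (e.drop m).getD i 0 / 2 ^ ((i + m) / m)) / 2 := by
  have hm0 : 0 < m := hm
  have hexp1 : ∀ i, i < m → (i + m) / m = 1 := by
    intro i hi
    rw [Nat.add_div_right i hm0, Nat.div_eq_of_lt hi]
  rcases le_or_gt e.length m with h | h
  · rw [List.drop_eq_nil_of_le h]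
    simp only [List.length_nil, Finset.range_zero, Finset.sum_empty, add_zero]
    have h1 : ∑ i ∈ range m, e.getD i 0 = ∑ i ∈ range e.length, e.getD i 0 := by
      symm
      apply Finset.sum_subset (Finset.range_subset_range.mpr h)
      intro i _ hi
      rw [Finset.mem_range, not_lt] at hi
      rw [List.getD_eq_getElem?_getD, List.getElem?_eq_none hi]
      rfl
    rw [h1, Finset.sum_div]
    apply Finset.sum_congr rfl
    intro i hi
    rw [Finset.mem_range] at hi
    rw [hexp1 i (lt_of_lt_of_le hi h), pow_one]
  · rw [Finset.range_eq_Ico, ← Finset.sum_Ico_consecutive _ (Nat.zero_le m) h.le]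
    have h1 : ∑ i ∈ Finset.Ico 0 m, e.getD i 0 / 2 ^ ((i + m) / m)
        = (∑ i ∈ range m, e.getD i 0) / 2 := by
      rw [← Finset.range_eq_Ico, Finset.sum_div]
      apply Finset.sum_congr rfl
      intro i hi
      rw [Finset.mem_range] at hi
      rw [hexp1 i hi, pow_one]
    have h2 : ∑ i ∈ Finset.Ico m e.length, e.getD i 0 / 2 ^ ((i + m) / m)
        = (∑ i ∈ range (e.drop m).length, (e.drop m).getD i 0 / 2 ^ ((i + m) / m)) / 2 := by
      rw [Finset.sum_Ico_eq_sum_range, List.length_drop, Finset.sum_div]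
      apply Finset.sum_congr rfl
      intro i _
      have hg : e.getD (m + i) 0 = (e.drop m).getD i 0 := by
        rw [List.getD_eq_getElem?_getD, List.getD_eq_getElem?_getD, List.getElem?_drop]
      have hx : (m + i + m) / m = (i + m) / m + 1 := by
        rw [show m + i + m = (i + m) + m by ring, Nat.add_div_right _ hm0]
      rw [hg, hx, pow_succ, ← div_div]
    rw [h1, h2]
    ring

lemma build_omega {J : Type} (m : ℕ) (hm : 1 ≤ m) (p : J → ℝ) :
    ∀ L : List J,
      ∑ ℓ : Fin m, Tseq ((buildSeq m L ℓ).map p) ((buildSeq m L ℓ).map p).length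
        = ∑ i ∈ range (L.map p).length, (L.map p).getD i 0 / 2 ^ ((i + m) / m)
  | [] => by simp [buildSeq_nil, Tseq]
  | (a :: L) => by
    have IH := build_omega m hm p ((a :: L).drop m)
    rw [Finset.sum_congr rfl (fun ℓ _ => Ov_buildSeq_cons m hm p a L ℓ)]
    have hsplit : ∑ ℓ : Fin m,
        (Tseq ((buildSeq m ((a :: L).drop m) ℓ).map p)
            ((buildSeq m ((a :: L).drop m) ℓ).map p).length
          + ((a :: L).map p).getD (ℓ : ℕ) 0) / 2
        = ((∑ ℓ : Fin m, Tseq ((buildSeq m ((a :: L).drop m) ℓ).map p)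
            ((buildSeq m ((a :: L).drop m) ℓ).map p).length)
          + ∑ ℓ : Fin m, ((a :: L).map p).getD (ℓ : ℕ) 0) / 2 := by
      rw [← Finset.sum_add_distrib, Finset.sum_div]
    rw [hsplit, IH, Fin.sum_univ_eq_sum_range (fun i => ((a :: L).map p).getD i 0) m,
      List.map_drop, B_rec m hm ((a :: L).map p)]
    ring
termination_by L => L.length
decreasing_by
  rw [List.length_drop]
  simp only [List.length_cons]
  omega

open Finset in
/-- Unit weights, `m ≥ 1` shared processors.  Let
`d = [p_(1), …, p_(n)]` list the processing times in non-increasing order.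
Then the maximum total weighted overlap over all feasible synchronized
schedules equals `B = Σ_{i=1}^{n} p_(i) / 2^⌈i/m⌉` (0-indexed below:
`⌈(i+1)/m⌉ = (i+m)/m` by natural division); in particular, for every partition
of the jobs into `m` groups, the ℓ-th group sorted ascending as
`q^ℓ_1 ≤ ⋯ ≤ q^ℓ_{n_ℓ}`, one has
`Σ_ℓ Σ_i q^ℓ_i / 2^(n_ℓ+1-i) ≤ B`, and the bound is attained. -/
theorem unit_weight_multiprocessor_optimum
    {J : Type} [Fintype J] [DecidableEq J] {m : ℕ} (hm : 1 ≤ m)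
    (p : J → ℝ) (hp : ∀ j, 0 < p j)
    (d : List ℝ) (hperm : d.Perm (Finset.univ.toList.map p))
    (hsorted : d.Pairwise (· ≥ ·)) :
    IsGreatest
      {x : ℝ | ∃ S : SyncSchedule J m,
        S.Feasible p ∧ S.Omega p (fun _ => 1) = x}
      (∑ i ∈ Finset.range d.length, d.getD i 0 / 2 ^ ((i + m) / m)) ∧
    (∀ (g : J → Fin m) (s : Fin m → List ℝ),
      (∀ ℓ : Fin m,
        (s ℓ).Perm ((Finset.univ.filter (fun j => g j = ℓ)).toList.map p) ∧
        (s ℓ).Pairwise (· ≤ ·)) →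
      ∑ ℓ : Fin m, ∑ i ∈ Finset.range (s ℓ).length,
          (s ℓ).getD i 0 / 2 ^ ((s ℓ).length - i)
        ≤ ∑ i ∈ Finset.range d.length, d.getD i 0 / 2 ^ ((i + m) / m)) := by
  classical
  refine ⟨⟨?_, ?_⟩, ?_⟩
  · -- membership
    obtain ⟨L, hLperm, hLmap⟩ := exists_list_map p d Finset.univ.toList hperm
    have hLnd : L.Nodup := (hLperm.nodup_iff).mpr (Finset.nodup_toList _)
    have hLsorted : (L.map p).Pairwise (· ≥ ·) := by rw [hLmap]; exact hsorted
    refine ⟨⟨fun ℓ => buildSeq m L ℓ, fun ℓ => nodup_buildSeq m L hLnd ℓ,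
      fun i i' j h h' => disj_buildSeq m L hLnd i i' j h h'⟩, ?_, ?_⟩
    · intro ℓ
      apply feasible_of_sorted_pos
      · exact sorted_buildSeq m p L hLsorted ℓ
      · intro x hx
        rw [List.mem_map] at hx
        obtain ⟨j, _, rfl⟩ := hx
        exact hp j
    · unfold SyncSchedule.Omega
      rw [Finset.sum_congr rfl (fun ℓ _ => by
        rw [listOverlap_ones p (buildSeq m L ℓ),
          show (buildSeq m L ℓ).length = ((buildSeq m L ℓ).map p).length from
            (List.length_map _).symm])]
      rw [build_omega m hm p L, hLmap]
  · rintro x ⟨S, _, rfl⟩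
    exact omega_le hm p hp d hperm hsorted S
  · intro g s hgs
    have hex : ∀ ℓ : Fin m, ∃ Lℓ : List J,
        Lℓ.Perm ((Finset.univ.filter (fun j => g j = ℓ)).toList) ∧ Lℓ.map p = s ℓ := by
      intro ℓ
      obtain ⟨Lℓ, h1, h2⟩ := exists_list_map p (s ℓ) _ (hgs ℓ).1
      exact ⟨Lℓ, h1, h2⟩
    choose Lf hLf1 hLf2 using hex
    have hmem : ∀ ℓ j, j ∈ Lf ℓ → g j = ℓ := by
      intro ℓ j hj
      have := (hLf1 ℓ).mem_iff.mp hj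
      rw [Finset.mem_toList, Finset.mem_filter] at this
      exact this.2
    set S' : SyncSchedule J m :=
      ⟨fun ℓ => Lf ℓ,
       fun ℓ => ((hLf1 ℓ).nodup_iff).mpr (Finset.nodup_toList _),
       fun i i' j h h' => by rw [← hmem i j h, ← hmem i' j h']⟩ with hS'
    have hval : S'.Omega p (fun _ => 1)
        = ∑ ℓ : Fin m, ∑ i ∈ Finset.range (s ℓ).length,
            (s ℓ).getD i 0 / 2 ^ ((s ℓ).length - i) := by
      unfold SyncSchedule.Omega
      apply Finset.sum_congr rfl
      intro ℓ _
      show listOverlap ((Lf ℓ).map p) ((Lf ℓ).map fun _ => (1:ℝ)) = _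
      rw [listOverlap_ones p (Lf ℓ), hLf2 ℓ,
        show (Lf ℓ).length = (s ℓ).length from by rw [← hLf2 ℓ, List.length_map],
        Tseq_eq]
    rw [← hval]
    exact omega_le hm p hp d hperm hsorted S'
end
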